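/- Let φ ∈ (0,1], h > 1, and suppose 2/(φ·(h-1)+2) < b < 1. Then the equation g(x,b) = φ·(h-1) has exactly one solution x̂(φ,h,b) in the open interval (1/2, 1). -/

import Mathlib

set_option maxHeartbeats 1000000

/-- The function `g(x,b)` of the paper, for `b ∈ (0,1)`:
`g(x,b) = (x^{1-b} - (1-x)^{1-b}) / (x·(1-x)^{1-b} - (1-x)·x^{1-b})` for
`x ∈ (1/2,1)` and `g(1/2,b) = 2/b - 2`. -/
noncomputable def g (x b : ℝ) : ℝ :=
  if x = 1 / 2 then 2 / b - 2
  else (x ^ (1 - b) - (1 - x) ^ (1 - b)) /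
    (x * (1 - x) ^ (1 - b) - (1 - x) * x ^ (1 - b))

noncomputable def Faux (c b x : ℝ) : ℝ :=
  (1-b)*Real.log x - (1-b)*Real.log (1-x) + Real.log (1+c*(1-x)) - Real.log (1+c*x)

noncomputable def Faux' (c b x : ℝ) : ℝ :=
  (1-b)/x + (1-b)/(1-x) - c/(1+c*(1-x)) - c/(1+c*x)

lemma hasDerivAt_Faux (c b : ℝ) (hc : 0 < c) {x : ℝ} (hx0 : 0 < x) (hx1 : x < 1) :
    HasDerivAt (Faux c b) (Faux' c b x) x := by
  have h1 : (0:ℝ) < 1 - x := by linarith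
  have h2 : (0:ℝ) < 1 + c*(1-x) := by nlinarith
  have h3 : (0:ℝ) < 1 + c*x := by nlinarith
  have d1 : HasDerivAt (fun y : ℝ => Real.log y) x⁻¹ x := Real.hasDerivAt_log hx0.ne'
  have d2 : HasDerivAt (fun y : ℝ => 1 - y) (-1) x := by
    simpa using (hasDerivAt_id x).const_sub 1
  have d2l : HasDerivAt (fun y : ℝ => Real.log (1-y)) (-1/(1-x)) x := d2.log h1.ne'
  have d3 : HasDerivAt (fun y : ℝ => 1 + c*(1-y)) (c * -1) x := (d2.const_mul c).const_add 1
  have d3l : HasDerivAt (fun y : ℝ => Real.log (1+c*(1-y))) ((c * -1)/(1+c*(1-x))) x :=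
    d3.log h2.ne'
  have d4 : HasDerivAt (fun y : ℝ => 1 + c*y) c x := by
    simpa using ((hasDerivAt_id x).const_mul c).const_add 1
  have d4l : HasDerivAt (fun y : ℝ => Real.log (1+c*y)) (c/(1+c*x)) x := d4.log h3.ne'
  have H := (((d1.const_mul (1-b)).sub (d2l.const_mul (1-b))).add d3l).sub d4l
  refine H.congr_deriv (Eq.symm ?_)
  unfold Faux'
  field_simp [hx0.ne', h1.ne', h2.ne', h3.ne']
  ring

lemma g_eq_iff (c b : ℝ) (hc : 0 < c) (hb0 : 0 < b) (hb1 : b < 1) {x : ℝ}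
    (hx : x ∈ Set.Ioo (1/2 : ℝ) 1) : g x b = c ↔ Faux c b x = 0 := by
  obtain ⟨hxl, hxr⟩ := hx
  have hxne : x ≠ 1/2 := ne_of_gt hxl
  have hx0 : (0:ℝ) < x := by linarith
  have h1x : (0:ℝ) < 1 - x := by linarith
  have hx1x : 1 - x < x := by linarith
  set A := x ^ (1-b) with hA
  set B := (1-x) ^ (1-b) with hB
  have hApos : 0 < A := Real.rpow_pos_of_pos hx0 _
  have hBpos : 0 < B := Real.rpow_pos_of_pos h1x _
  have e1 : A * x ^ b = x := by
    rw [hA, ← Real.rpow_add hx0]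
    norm_num
  have e2 : B * (1-x) ^ b = 1 - x := by
    rw [hB, ← Real.rpow_add h1x]
    norm_num
  have hpb : (1-x) ^ b < x ^ b := Real.rpow_lt_rpow h1x.le hx1x hb0
  have hD : 0 < x * B - (1-x) * A := by
    have : x * B - (1-x) * A = A * B * (x ^ b - (1-x) ^ b) := by
      nlinarith [e1, e2, hApos, hBpos]
    rw [this]
    have := sub_pos.mpr hpb
    positivity
  have h2 : (0:ℝ) < 1 + c*(1-x) := by nlinarith
  have h3 : (0:ℝ) < 1 + c*x := by nlinarith
  have step1 : g x b = c ↔ A * (1 + c*(1-x)) = B * (1 + c*x) := by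
    rw [g, if_neg hxne, div_eq_iff hD.ne']
    constructor <;> intro hEq <;> nlinarith [hEq]
  rw [step1]
  have logA : Real.log A = (1-b) * Real.log x := by rw [hA, Real.log_rpow hx0]
  have logB : Real.log B = (1-b) * Real.log (1-x) := by rw [hB, Real.log_rpow h1x]
  constructor
  · intro hEq
    have := congrArg Real.log hEq
    rw [Real.log_mul hApos.ne' h2.ne', Real.log_mul hBpos.ne' h3.ne', logA, logB] at this
    unfold Faux
    linarith
  · intro hF
    unfold Faux at hF
    have hlog : Real.log (A * (1 + c*(1-x))) = Real.log (B * (1 + c*x)) := by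
      rw [Real.log_mul hApos.ne' h2.ne', Real.log_mul hBpos.ne' h3.ne', logA, logB]
      linarith
    have h4 : 0 < A * (1 + c*(1-x)) := by positivity
    have h5 : 0 < B * (1 + c*x) := by positivity
    calc A * (1 + c*(1-x)) = Real.exp (Real.log (A * (1 + c*(1-x)))) := (Real.exp_log h4).symm
      _ = Real.exp (Real.log (B * (1 + c*x))) := by rw [hlog]
      _ = B * (1 + c*x) := Real.exp_log h5

private theorem Faux_main (c b : ℝ) (hc : 0 < c) (hb1 : b < 1) (hbc : 2 < b * (c + 2)) :
    ∃! x : ℝ, x ∈ Set.Ioo (1 / 2 : ℝ) 1 ∧ Faux c b x = 0 := by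
  have hb0 : 0 < b := by nlinarith
  have hden : 0 < c * (2 + b*c) := by positivity
  set s := (1-b)*(1+c)/(c*(2+b*c)) with hsdef
  have hskey : s * (c*(2+b*c)) = (1-b)*(1+c) := div_mul_cancel₀ _ hden.ne'
  have hs0 : 0 < s := by
    apply div_pos (by nlinarith) hden
  have hs4 : s < 1/4 := by
    rw [hsdef, div_lt_iff₀ hden]; nlinarith
  set d := Real.sqrt (1 - 4*s) with hddef
  have hd2 : d^2 = 1 - 4*s := Real.sq_sqrt (by linarith)
  have hd0 : 0 < d := Real.sqrt_pos.mpr (by linarith)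
  have hd1 : d < 1 := by nlinarith
  set t := (1+d)/2 with htdef
  have htl : 1/2 < t := by rw [htdef]; linarith
  have htr : t < 1 := by rw [htdef]; linarith
  have hts : t * (1 - t) = s := by rw [htdef]; nlinarith [hd2]
  -- derivative facts
  have hFd : ∀ x ∈ Set.Ioo (0:ℝ) 1, HasDerivAt (Faux c b) (Faux' c b x) x :=
    fun x hx => hasDerivAt_Faux c b hc hx.1 hx.2
  have hF'eq : ∀ x ∈ Set.Ioo (0:ℝ) 1, Faux' c b x =
      ((1-b)*(1+c) - x*(1-x)*(c*(2+b*c))) / (x*(1-x)*((1+c*(1-x))*(1+c*x))) := by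
    rintro x ⟨hx0, hx1⟩
    have h1 : (0:ℝ) < 1 - x := by linarith
    have h2 : (0:ℝ) < 1 + c*(1-x) := by linarith [mul_pos hc h1]
    have h3 : (0:ℝ) < 1 + c*x := by linarith [mul_pos hc hx0]
    rw [Faux']
    field_simp
    ring
  have hneg : ∀ x ∈ Set.Ioo (1/2:ℝ) t, Faux' c b x < 0 := by
    rintro x ⟨hxl, hxr⟩
    have hx0 : (0:ℝ) < x := by linarith
    have hx1 : x < 1 := by linarith
    have h1 : (0:ℝ) < 1 - x := by linarith
    have h2 : (0:ℝ) < 1 + c*(1-x) := by linarith [mul_pos hc h1]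
    have h3 : (0:ℝ) < 1 + c*x := by linarith [mul_pos hc hx0]
    rw [hF'eq x ⟨hx0, hx1⟩]
    apply div_neg_of_neg_of_pos
    · have hsx : s < x*(1-x) := by
        nlinarith [mul_pos (sub_pos.mpr hxr) (show (0:ℝ) < x + t - 1 by linarith)]
      have := mul_lt_mul_of_pos_right hsx hden
      linarith [hskey]
    · positivity
  have hpos : ∀ x ∈ Set.Ioo t 1, 0 < Faux' c b x := by
    rintro x ⟨hxl, hxr⟩
    have hx0 : (0:ℝ) < x := by linarith
    have h1 : (0:ℝ) < 1 - x := by linarith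
    have h2 : (0:ℝ) < 1 + c*(1-x) := by linarith [mul_pos hc h1]
    have h3 : (0:ℝ) < 1 + c*x := by linarith [mul_pos hc hx0]
    rw [hF'eq x ⟨hx0, hxr⟩]
    apply div_pos
    · have hsx : x*(1-x) < s := by
        nlinarith [mul_pos (sub_pos.mpr hxl) (show (0:ℝ) < x + t - 1 by linarith)]
      have := mul_lt_mul_of_pos_right hsx hden
      linarith [hskey]
    · positivity
  -- continuity
  have hcontOn : ∀ u ⊆ Set.Ioo (0:ℝ) 1, ContinuousOn (Faux c b) u :=
    fun u hu x hx => ((hFd x (hu hx)).continuousAt).continuousWithinAt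
  have hsub1 : Set.Icc (1/2:ℝ) t ⊆ Set.Ioo (0:ℝ) 1 :=
    fun x hx => ⟨by linarith [hx.1], by linarith [hx.2]⟩
  have hsub2 : Set.Ico t (1:ℝ) ⊆ Set.Ioo (0:ℝ) 1 :=
    fun x hx => ⟨by linarith [hx.1], hx.2⟩
  have hanti : StrictAntiOn (Faux c b) (Set.Icc (1/2) t) := by
    apply strictAntiOn_of_deriv_neg (convex_Icc _ _) (hcontOn _ hsub1)
    intro x hx
    rw [interior_Icc] at hx
    rw [(hFd x (hsub1 (Set.mem_Icc_of_Ioo hx))).deriv]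
    exact hneg x hx
  have hmono : StrictMonoOn (Faux c b) (Set.Ico t 1) := by
    apply strictMonoOn_of_deriv_pos (convex_Ico _ _) (hcontOn _ hsub2)
    intro x hx
    rw [interior_Ico] at hx
    rw [(hFd x (hsub2 (Set.mem_Ico_of_Ioo hx))).deriv]
    exact hpos x hx
  have hFhalf : Faux c b (1/2) = 0 := by
    rw [Faux]; norm_num
  have hFt : Faux c b t < 0 := by
    have := hanti (Set.left_mem_Icc.mpr htl.le) (Set.right_mem_Icc.mpr htl.le) htl
    rwa [hFhalf] at this
  -- find y near 1 with Faux > 0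
  have hKb : (0:ℝ) < 1 - b := by linarith
  set K := (1-b)*Real.log (1/2) - Real.log (1+c) with hKdef
  have hlow : ∀ x ∈ Set.Ioo (1/2:ℝ) 1, K - (1-b)*Real.log (1-x) ≤ Faux c b x := by
    rintro x ⟨hxl, hxr⟩
    have h1 : (0:ℝ) < 1 - x := by linarith
    have l1 : Real.log (1/2) ≤ Real.log x := Real.log_le_log (by norm_num) hxl.le
    have l2 : (0:ℝ) ≤ Real.log (1+c*(1-x)) := Real.log_nonneg (by nlinarith [mul_pos hc h1])
    have l3 : Real.log (1+c*x) ≤ Real.log (1+c) :=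
      Real.log_le_log (by nlinarith [mul_pos hc (show (0:ℝ) < x by linarith)])
        (by nlinarith [mul_le_mul_of_nonneg_left hxr.le hc.le])
    have := mul_le_mul_of_nonneg_left l1 hKb.le
    rw [Faux, hKdef]
    linarith
  set ε := min ((1-t)/2) (Real.exp (K/(1-b))/2) with hεdef
  have hε0 : 0 < ε := lt_min (by linarith) (by positivity)
  set y := 1 - ε with hydef
  have hyt : t < y := by
    have := min_le_left ((1-t)/2) (Real.exp (K/(1-b))/2)
    rw [hydef]; simp only [hεdef]; linarith [this]
  have hy1 : y < 1 := by rw [hydef]; linarith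
  have hyhalf : (1/2:ℝ) < y := lt_trans htl hyt
  have hFy : 0 < Faux c b y := by
    have h1y : 1 - y = ε := by rw [hydef]; ring
    have hle : ε ≤ Real.exp (K/(1-b))/2 := min_le_right _ _
    have hlt : Real.log ε < K/(1-b) := by
      calc Real.log ε ≤ Real.log (Real.exp (K/(1-b))/2) := Real.log_le_log hε0 hle
        _ < Real.log (Real.exp (K/(1-b))) := by
            apply Real.log_lt_log (by positivity)
            linarith [Real.exp_pos (K/(1-b))]
        _ = K/(1-b) := Real.log_exp _
    have h3 : (1-b) * Real.log (1-y) < K := by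
      rw [h1y]
      have := mul_lt_mul_of_pos_left hlt hKb
      rwa [mul_div_cancel₀ _ hKb.ne'] at this
    have h2 := hlow y ⟨hyhalf, hy1⟩
    linarith
  -- IVT
  have hcont3 : ContinuousOn (Faux c b) (Set.Icc t y) :=
    hcontOn _ (fun x hx => ⟨by linarith [hx.1], by linarith [hx.2]⟩)
  obtain ⟨x₀, hx₀mem, hx₀⟩ :=
    intermediate_value_Ioo hyt.le hcont3 (Set.mem_Ioo.mpr ⟨hFt, hFy⟩)
  have hx₀t : t < x₀ := hx₀mem.1
  have hx₀1 : x₀ < 1 := lt_trans hx₀mem.2 hy1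
  refine ⟨x₀, ⟨⟨lt_trans htl hx₀t, hx₀1⟩, hx₀⟩, ?_⟩
  rintro z ⟨⟨hzl, hzr⟩, hFz⟩
  have hzt : t < z := by
    by_contra hle
    push_neg at hle
    have := hanti (Set.left_mem_Icc.mpr htl.le) ⟨by linarith, hle⟩ hzl
    rw [hFhalf, hFz] at this
    exact absurd this (lt_irrefl 0)
  exact hmono.injOn ⟨hzt.le, hzr⟩ ⟨hx₀t.le, hx₀1⟩ (hFz.trans hx₀.symm)

/-- Lemma 2(iii) of the paper: for `φ ∈ (0,1]`, `h > 1` and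
`2/(φ(h-1)+2) < b < 1`, the equation `g(x,b) = φ(h-1)` has exactly one
solution in `(1/2, 1)`. -/
theorem stmt_7 (φ h b : ℝ) (hφ : 0 < φ ∧ φ ≤ 1) (hh : 1 < h)
    (hb : 2 / (φ * (h - 1) + 2) < b ∧ b < 1) :
    ∃! x : ℝ, x ∈ Set.Ioo (1 / 2 : ℝ) 1 ∧ g x b = φ * (h - 1) := by
  obtain ⟨hφ0, hφ1⟩ := hφ
  obtain ⟨hb2, hb1⟩ := hb
  set c := φ * (h - 1) with hcdef
  have hc : 0 < c := mul_pos hφ0 (by linarith)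
  have hc2 : (0:ℝ) < c + 2 := by linarith
  have hbc : 2 < b * (c + 2) := by
    rw [div_lt_iff₀ hc2] at hb2; linarith
  have hb0 : 0 < b := by nlinarith
  obtain ⟨x₀, ⟨hx₀mem, hx₀F⟩, huniq⟩ := Faux_main c b hc hb1 hbc
  refine ⟨x₀, ⟨hx₀mem, (g_eq_iff c b hc hb0 hb1 hx₀mem).mpr hx₀F⟩, ?_⟩
  rintro z ⟨hzmem, hgz⟩
  exact huniq z ⟨hzmem, (g_eq_iff c b hc hb0 hb1 hzmem).mp hgz⟩
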